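/- Let 𝒜 and ℬ be unital C*-algebras and let ψ : 𝒜⁺ → ℬ⁺ be a surjective order isomorphism with ψ(t·1) = t·1 for all t > 0. Then for every projection P ∈ 𝒜 and every t > 0 one has ψ(tP) = t·ψ(P). -/

import Mathlib

section Aux

variable {C : Type*} [CStarAlgebra C] [PartialOrder C] [StarOrderedRing C]

private lemma stmt8_proj_nonneg {R : C} (h1 : IsSelfAdjoint R) (h2 : IsIdempotentElem R) :
    0 ≤ R := by
  have h : R = star R * R := by
    conv_lhs => rw [← h2.eq]
    rw [h1.star_eq]
  rw [h]
  exact star_mul_self_nonneg R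

private lemma stmt8_smul_nonneg {r : ℝ} (hr : 0 ≤ r) {a : C} (ha : 0 ≤ a) : 0 ≤ r • a :=
  smul_nonneg hr ha

private lemma stmt8_smul_le_smul {r : ℝ} (hr : 0 ≤ r) {a b : C} (hab : a ≤ b) :
    r • a ≤ r • b := by
  rw [← sub_nonneg, ← smul_sub]
  exact stmt8_smul_nonneg hr (sub_nonneg.mpr hab)

private lemma stmt8_smul_le_smul' {r s : ℝ} (hrs : r ≤ s) {a : C} (ha : 0 ≤ a) :
    r • a ≤ s • a := by
  rw [← sub_nonneg, ← sub_smul]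
  exact stmt8_smul_nonneg (sub_nonneg.mpr hrs) ha

private lemma stmt8_one_sa : IsSelfAdjoint (1 : C) := star_one C

private lemma stmt8_proj_le_one {R : C} (h1 : IsSelfAdjoint R) (h2 : IsIdempotentElem R) :
    R ≤ 1 :=
  sub_nonneg.mp (stmt8_proj_nonneg (stmt8_one_sa.sub h1) h2.one_sub)

/-- If `0 ≤ x`, `e` is selfadjoint and `e * x * e = 0` then `x * e = 0`. -/
private lemma stmt8_xe {x e : C} (hx : 0 ≤ x) (he : IsSelfAdjoint e) (hxe : e * x * e = 0) :
    x * e = 0 := by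
  set s : C := CFC.sqrt x with hs
  have hssa : IsSelfAdjoint s := IsSelfAdjoint.of_nonneg (CFC.sqrt_nonneg x)
  have hsq : s * s = x := CFC.sqrt_mul_sqrt_self x hx
  have h0 : s * e = 0 := by
    apply (CStarRing.star_mul_self_eq_zero_iff _).mp
    rw [star_mul, hssa.star_eq, he.star_eq]
    calc e * s * (s * e) = e * (s * s) * e := by noncomm_ring
      _ = 0 := by rw [hsq, hxe]
  calc x * e = s * (s * e) := by rw [← mul_assoc, hsq]
    _ = 0 := by rw [h0, mul_zero]

/-- Corner lemma, step 0 : if `0 ≤ w ≤ c • R` with `R` a projection, then `w = R * w * R`,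
in particular `w * R = w` and `R * w = w`. -/
private lemma stmt8_corner₀ {R : C} (h1 : IsSelfAdjoint R) (h2 : IsIdempotentElem R)
    {w : C} (hw : 0 ≤ w) {c : ℝ} (hle : w ≤ c • R) : R * w * R = w := by
  set E : C := 1 - R with hE
  have hEsa : IsSelfAdjoint E := stmt8_one_sa.sub h1
  have hER : E * R = 0 := by
    simp only [hE, sub_mul, one_mul, h2.eq, sub_self]
  have key : E * w * E = 0 := by
    have hub : star E * w * E ≤ star E * (c • R) * E := star_left_conjugate_le_conjugate hle E
    rw [hEsa.star_eq] at hub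
    have h0 : E * (c • R) * E = 0 := by
      rw [mul_smul_comm, smul_mul_assoc, hER, zero_mul, smul_zero]
    have hlb : 0 ≤ star E * w * E := star_left_conjugate_nonneg hw E
    rw [hEsa.star_eq] at hlb
    exact le_antisymm (h0 ▸ hub) hlb
  have hwE : w * E = 0 := stmt8_xe hw hEsa key
  have hwR : w * R = w := by
    have : w * E = w - w * R := by rw [hE, mul_sub, mul_one]
    rw [this] at hwE
    exact (sub_eq_zero.mp hwE).symm
  have hRw : R * w = w := by
    have := congrArg star hwR
    rwa [star_mul, h1.star_eq, (IsSelfAdjoint.of_nonneg hw).star_eq] at this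
  rw [hRw, hwR]

/-- Corner lemma : if `R` is a projection, `0 ≤ w ≤ c • R` and `w ≤ d • 1`, then `w ≤ d • R`. -/
private lemma stmt8_corner {R : C} (h1 : IsSelfAdjoint R) (h2 : IsIdempotentElem R)
    {w : C} (hw : 0 ≤ w) {c d : ℝ} (hle1 : w ≤ c • R) (hle2 : w ≤ d • (1 : C)) :
    w ≤ d • R := by
  have hcor := stmt8_corner₀ h1 h2 hw hle1
  have h := star_left_conjugate_le_conjugate hle2 R
  rw [h1.star_eq, hcor] at h
  calc w ≤ R * (d • (1 : C)) * R := h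
    _ = d • R := by rw [mul_smul_comm, mul_one, smul_mul_assoc, h2.eq]

/-- Order-disjointness of the corners of `P` and `1 - P`. -/
private lemma stmt8_disj {P : C} (h1 : IsSelfAdjoint P) (h2 : IsIdempotentElem P)
    {w : C} (hw : 0 ≤ w) {c d : ℝ} (hc : w ≤ c • P) (hd : w ≤ d • (1 - P)) : w = 0 := by
  have hEsa : IsSelfAdjoint (1 - P : C) := stmt8_one_sa.sub h1
  have hA := stmt8_corner₀ h1 h2 hw hc
  have hB := stmt8_corner₀ hEsa h2.one_sub hw hd
  have hPE : P * (1 - P) = 0 := by rw [mul_sub, mul_one, h2.eq, sub_self]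
  calc w = P * w * P := hA.symm
    _ = P * ((1 - P) * w * (1 - P)) * P := by rw [hB]
    _ = (P * (1 - P)) * w * ((1 - P) * P) := by noncomm_ring
    _ = 0 := by rw [hPE, zero_mul, zero_mul]

/-- Maximality : if `t•P ≤ z ≤ t•1` and the lower set of `z` is disjoint from that of
`t•(1-P)`, then `z = t•P`. -/
private lemma stmt8_max {P : C} (h1 : IsSelfAdjoint P) (h2 : IsIdempotentElem P)
    {t : ℝ} (ht : 0 ≤ t) {z : C} (hz1 : t • P ≤ z) (hz2 : z ≤ t • (1 : C))
    (hdisj : ∀ w : C, 0 ≤ w → w ≤ z → w ≤ t • (1 - P) → w = 0) : z = t • P := by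
  have hP0 : 0 ≤ P := stmt8_proj_nonneg h1 h2
  have htP0 : 0 ≤ t • P := stmt8_smul_nonneg ht hP0
  have hz0 : 0 ≤ z := le_trans htP0 hz1
  have hzsa : IsSelfAdjoint z := IsSelfAdjoint.of_nonneg hz0
  set d : C := t • (1 : C) - z with hdd
  have hd0 : 0 ≤ d := sub_nonneg.mpr hz2
  -- P * d * P = 0
  have c1 : t • P ≤ P * z * P := by
    have := star_left_conjugate_le_conjugate hz1 P
    rw [h1.star_eq] at this
    calc t • P = P * (t • P) * P := by
          rw [mul_smul_comm, smul_mul_assoc, h2.eq, h2.eq]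
      _ ≤ P * z * P := this
  have hPtP : P * (t • (1:C)) * P = t • P := by
    rw [mul_smul_comm, mul_one, smul_mul_assoc, h2.eq]
  have c5 : P * d * P = 0 := by
    have c3 : 0 ≤ P * d * P := by
      have := star_left_conjugate_nonneg hd0 P
      rwa [h1.star_eq] at this
    have c4 : P * d * P ≤ 0 := by
      have : P * d * P = t • P - P * z * P := by
        rw [hdd, mul_sub, sub_mul, hPtP]
      rw [this]
      exact sub_nonpos.mpr c1
    exact le_antisymm c4 c3
  have hdP : d * P = 0 := stmt8_xe hd0 h1 c5
  have hzP : z * P = t • P := by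
    have : d * P = t • P - z * P := by
      rw [hdd, sub_mul, smul_mul_assoc, one_mul]
    rw [this] at hdP
    exact (sub_eq_zero.mp hdP).symm
  have hPz : P * z = t • P := by
    have := congrArg star hzP
    rwa [star_mul, h1.star_eq, hzsa.star_eq,
      star_smul, star_trivial, h1.star_eq] at this
  -- u := z - t • P lies below both z and t • (1 - P)
  have hu1 : (0:C) ≤ z - t • P := sub_nonneg.mpr hz1
  have hu2 : z - t • P ≤ z := by
    have : z - t • P ≤ z - 0 := sub_le_sub_left htP0 z
    simpa using this
  have hu3 : z - t • P ≤ t • (1 - P) := by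
    have hconj := star_left_conjugate_le_conjugate hz2 (1 - P)
    have hEsa : IsSelfAdjoint (1 - P : C) := stmt8_one_sa.sub h1
    rw [hEsa.star_eq] at hconj
    have hL : (1 - P) * z * (1 - P) = z - t • P := by
      have expand : (1 - P) * z * (1 - P) = z - P * z - (z * P - P * (z * P)) := by
        noncomm_ring
      rw [expand, hzP, hPz]
      have : P * (t • P) = t • P := by rw [mul_smul_comm, h2.eq]
      rw [this]
      abel
    have hR' : (1 - P) * (t • (1:C)) * (1 - P) = t • (1 - P) := by
      have hE2 : IsIdempotentElem (1 - P : C) := h2.one_sub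
      rw [mul_smul_comm, mul_one, smul_mul_assoc, hE2.eq]
    rw [hL, hR'] at hconj
    exact hconj
  have h0 := hdisj _ hu1 hu2 hu3
  exact sub_eq_zero.mp h0

/-- The spectral lemma : an element `Y` with `0 ≤ Y ≤ t•1` which is maximal
with lower set disjoint from that of some positive `x'` is `t` times a projection. -/
private lemma stmt8_scalarproj {t : ℝ} (ht : 0 < t) {Y x' : C} (hY : 0 ≤ Y)
    (hYt : Y ≤ t • (1 : C)) (hx' : 0 ≤ x')
    (hdisj : ∀ w : C, 0 ≤ w → w ≤ Y → w ≤ x' → w = 0)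
    (hmax : ∀ z : C, 0 ≤ z → z ≤ t • (1 : C) → Y ≤ z →
      (∀ w : C, 0 ≤ w → w ≤ z → w ≤ x' → w = 0) → z = Y) :
    ∃ R : C, IsSelfAdjoint R ∧ IsIdempotentElem R ∧ Y = t • R := by
  have hYsa : IsSelfAdjoint Y := IsSelfAdjoint.of_nonneg hY
  have hspec0 : ∀ x ∈ spectrum ℝ Y, 0 ≤ x := fun x hx => spectrum_nonneg_of_nonneg hY hx
  have hspect : ∀ x ∈ spectrum ℝ Y, x ≤ t := by
    have : Y ≤ algebraMap ℝ C t := by rwa [Algebra.algebraMap_eq_smul_one]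
    exact (le_algebraMap_iff_spectrum_le (r := t) (a := Y) hYsa).mp this
  set f : ℝ → ℝ := fun s => min (2*s) t with hf
  have hfc : Continuous f := (continuous_const.mul continuous_id).min continuous_const
  set Z : C := cfc f Y with hZ
  have h1 : Y ≤ Z := by
    conv_lhs => rw [← cfc_id ℝ Y]
    refine cfc_mono (fun x hx => le_min ?_ (hspect x hx))
    simp only [id_eq]
    linarith [hspec0 x hx]
  have h2 : 0 ≤ Z := cfc_nonneg fun x hx => le_min (by linarith [hspec0 x hx]) ht.le
  have h3 : Z ≤ t • (1 : C) := by
    rw [← Algebra.algebraMap_eq_smul_one]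
    calc Z ≤ cfc (fun _ : ℝ => t) Y := cfc_mono fun x hx => min_le_right _ _
      _ = algebraMap ℝ C t := cfc_const t Y
  have h4 : Z ≤ (2:ℝ) • Y := by
    calc Z ≤ cfc (fun s : ℝ => (2:ℝ) * s) Y := cfc_mono fun x hx => min_le_left _ _
      _ = (2:ℝ) • Y := cfc_const_mul_id 2 Y
  have hdisjZ : ∀ w : C, 0 ≤ w → w ≤ Z → w ≤ x' → w = 0 := by
    intro w hw hwZ hwx
    have h12 : (2⁻¹:ℝ) • w ≤ Y := by
      have h := stmt8_smul_le_smul (a := w) (b := (2:ℝ) • Y) (by norm_num : (0:ℝ) ≤ 2⁻¹)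
        (hwZ.trans h4)
      rwa [smul_smul, show (2⁻¹:ℝ)*2 = 1 by norm_num, one_smul] at h
    have hww : (2⁻¹:ℝ) • w ≤ w := by
      have := stmt8_smul_le_smul' (show (2⁻¹:ℝ) ≤ 1 by norm_num) hw
      rwa [one_smul] at this
    have h0 : (2⁻¹:ℝ) • w = 0 :=
      hdisj _ (stmt8_smul_nonneg (by norm_num) hw) h12 (hww.trans hwx)
    calc w = (2:ℝ) • ((2⁻¹:ℝ) • w) := by
          rw [smul_smul, show (2:ℝ)*2⁻¹ = 1 by norm_num, one_smul]
      _ = 0 := by rw [h0, smul_zero]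
  have hZY : Z = Y := hmax Z h2 h3 h1 hdisjZ
  -- key : t • Y - Y * Y = 0
  have e1 : cfc (fun s : ℝ => t * s - s * s) Y = t • Y - Y * Y := by
    rw [cfc_sub (fun s : ℝ => t * s) (fun s : ℝ => s * s) Y]
    congr 1
    · exact cfc_const_mul_id t Y
    · rw [cfc_mul (fun s : ℝ => s) (fun s : ℝ => s) Y, cfc_id' ℝ Y]
  have e2 : 0 ≤ cfc (fun s : ℝ => t * s - s * s) Y :=
    cfc_nonneg fun x hx => by nlinarith [hspec0 x hx, hspect x hx]
  have e3 : cfc (fun s : ℝ => t * s - s * s) Y ≤ cfc (fun s : ℝ => t * (f s - s)) Y := by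
    refine cfc_mono fun x hx => ?_
    rcases le_or_gt (2*x) t with h | h
    · have : f x = 2*x := min_eq_left h
      rw [this]
      nlinarith [hspec0 x hx]
    · have : f x = t := min_eq_right h.le
      rw [this]
      nlinarith [hspec0 x hx, hspect x hx]
  have e4 : cfc (fun s : ℝ => t * (f s - s)) Y = 0 := by
    have hfs : cfc (fun s : ℝ => f s - s) Y = 0 := by
      have : cfc (fun s : ℝ => f s - s) Y = cfc f Y - cfc (fun s : ℝ => s) Y :=
        cfc_sub f (fun s : ℝ => s) Y
      rw [this, cfc_id' ℝ Y, ← hZ, hZY, sub_self]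
    rw [cfc_const_mul t (fun s : ℝ => f s - s) Y, hfs, smul_zero]
  have key : t • Y - Y * Y = 0 := by
    refine le_antisymm ?_ ?_
    · rw [← e1]
      exact e3.trans_eq e4
    · rw [← e1]
      exact e2
  have hYY : Y * Y = t • Y := (sub_eq_zero.mp key).symm
  refine ⟨t⁻¹ • Y, (IsSelfAdjoint.all t⁻¹).smul hYsa, ?_, ?_⟩
  · show (t⁻¹ • Y) * (t⁻¹ • Y) = t⁻¹ • Y
    rw [smul_mul_smul_comm, hYY, smul_smul]
    congr 1
    field_simp
  · rw [smul_smul, mul_inv_cancel₀ ht.ne', one_smul]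

end Aux

/-- Let `ψ : 𝒜⁺ → ℬ⁺` be a surjective order isomorphism between the positive
cones of unital C*-algebras with `ψ (t • 1) = t • 1` for all `t > 0`.  Then for every
projection `P ∈ 𝒜` and every `t > 0` one has `ψ (t • P) = t • ψ P`. -/
theorem stmt8 {A B : Type*} [CStarAlgebra A] [PartialOrder A] [StarOrderedRing A]
    [CStarAlgebra B] [PartialOrder B] [StarOrderedRing B]
    (ψ : A → B)
    (hmap : ∀ a : A, 0 ≤ a → 0 ≤ ψ a)
    (hsurj : ∀ b : B, 0 ≤ b → ∃ a : A, 0 ≤ a ∧ ψ a = b)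
    (horder : ∀ a b : A, 0 ≤ a → 0 ≤ b → (a ≤ b ↔ ψ a ≤ ψ b))
    (hunit : ∀ t : ℝ, 0 < t → ψ (t • (1 : A)) = t • (1 : B)) :
    ∀ P : A, IsSelfAdjoint P → IsIdempotentElem P →
      ∀ t : ℝ, 0 < t → ψ (t • P) = t • ψ P := by
  intro P hPsa hPidem t ht
  have h1A : (0:A) ≤ 1 := by simpa using star_mul_self_nonneg (1:A)
  have hP0 : 0 ≤ P := stmt8_proj_nonneg hPsa hPidem
  have hP1 : P ≤ 1 := stmt8_proj_le_one hPsa hPidem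
  have hE0 : (0:A) ≤ 1 - P := sub_nonneg.mpr hP1
  have hpsi0 : ψ 0 = 0 := by
    obtain ⟨a₀, ha₀, h0⟩ := hsurj 0 le_rfl
    have h1 : a₀ ≤ 0 := (horder a₀ 0 ha₀ le_rfl).mpr (by rw [h0]; exact hmap 0 le_rfl)
    rw [← h0, le_antisymm h1 ha₀]
  set s : ℝ := t + 1 with hsdef
  have hs0 : (0:ℝ) < s := by linarith
  have hts : t ≤ s := by linarith
  have h1s : (1:ℝ) ≤ s := by linarith
  have hsP0 : (0:A) ≤ s • P := stmt8_smul_nonneg hs0.le hP0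
  have hsE0 : (0:A) ≤ s • (1 - P) := stmt8_smul_nonneg hs0.le hE0
  have hs10 : (0:A) ≤ s • (1:A) := stmt8_smul_nonneg hs0.le h1A
  set Y : B := ψ (s • P) with hYdef
  set Y' : B := ψ (s • (1 - P)) with hY'def
  have hY0 : 0 ≤ Y := hmap _ hsP0
  have hY'0 : 0 ≤ Y' := hmap _ hsE0
  have hYle : Y ≤ s • (1:B) := by
    have h := (horder (s • P) (s • (1:A)) hsP0 hs10).mp (stmt8_smul_le_smul hs0.le hP1)
    rwa [hunit s hs0] at h
  -- transported disjointness
  have Ddisj : ∀ y : B, 0 ≤ y → y ≤ Y → y ≤ Y' → y = 0 := by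
    intro y hy hy1 hy2
    obtain ⟨a, ha, rfl⟩ := hsurj y hy
    have ha1 : a ≤ s • P := (horder a (s • P) ha hsP0).mpr hy1
    have ha2 : a ≤ s • (1 - P) := (horder a (s • (1 - P)) ha hsE0).mpr hy2
    rw [stmt8_disj hPsa hPidem ha ha1 ha2, hpsi0]
  -- transported maximality
  have Dmax : ∀ z : B, 0 ≤ z → z ≤ s • (1:B) → Y ≤ z →
      (∀ w : B, 0 ≤ w → w ≤ z → w ≤ Y' → w = 0) → z = Y := by
    intro z hz hz1 hz2 hzd
    obtain ⟨a, ha, rfl⟩ := hsurj z hz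
    have haP : s • P ≤ a := (horder (s • P) a hsP0 ha).mpr hz2
    have ha1 : a ≤ s • (1:A) := by
      refine (horder a (s • (1:A)) ha hs10).mpr ?_
      rwa [hunit s hs0]
    have hadisj : ∀ w : A, 0 ≤ w → w ≤ a → w ≤ s • (1 - P) → w = 0 := by
      intro w hw hwa hwE
      have hw1 : ψ w ≤ ψ a := (horder w a hw ha).mp hwa
      have hw2 : ψ w ≤ Y' := (horder w (s • (1 - P)) hw hsE0).mp hwE
      have hw0 : ψ w = 0 := hzd (ψ w) (hmap w hw) hw1 hw2
      have : w ≤ 0 := (horder w 0 hw le_rfl).mpr (by rw [hpsi0, hw0])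
      exact le_antisymm this hw
    rw [stmt8_max hPsa hPidem hs0.le haP ha1 hadisj]
  obtain ⟨R, hRsa, hRidem, hYR⟩ := stmt8_scalarproj hs0 hY0 hYle hY'0 Ddisj Dmax
  have hR0 : 0 ≤ R := stmt8_proj_nonneg hRsa hRidem
  have hR1 : R ≤ 1 := stmt8_proj_le_one hRsa hRidem
  -- coherence at each level t' ≤ s
  have coh : ∀ t' : ℝ, 0 < t' → t' ≤ s → ψ (t' • P) = t' • R := by
    intro t' ht' ht's
    have ht'P0 : (0:A) ≤ t' • P := stmt8_smul_nonneg ht'.le hP0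
    have ht'10 : (0:A) ≤ t' • (1:A) := stmt8_smul_nonneg ht'.le h1A
    have hpsi_t'P0 : 0 ≤ ψ (t' • P) := hmap _ ht'P0
    have hup : ψ (t' • P) ≤ t' • R := by
      refine stmt8_corner hRsa hRidem hpsi_t'P0 (c := s) ?_ ?_
      · have := (horder (t' • P) (s • P) ht'P0 hsP0).mp (stmt8_smul_le_smul' ht's hP0)
        rwa [← hYdef, hYR] at this
      · have := (horder (t' • P) (t' • (1:A)) ht'P0 ht'10).mp (stmt8_smul_le_smul ht'.le hP1)
        rwa [hunit t' ht'] at this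
    have hdown : t' • R ≤ ψ (t' • P) := by
      obtain ⟨a, ha, hae⟩ := hsurj (t' • R) (smul_nonneg ht'.le hR0)
      have haP : a ≤ t' • P := by
        refine stmt8_corner hPsa hPidem ha (c := s) ?_ ?_
        · refine (horder a (s • P) ha hsP0).mpr ?_
          rw [hae, ← hYdef, hYR]
          exact stmt8_smul_le_smul' ht's hR0
        · refine (horder a (t' • (1:A)) ha ht'10).mpr ?_
          rw [hae, hunit t' ht']
          exact stmt8_smul_le_smul ht'.le hR1
      have := (horder a (t' • P) ha ht'P0).mp haP
      rwa [hae] at this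
    exact le_antisymm hup hdown
  have e1 : ψ (t • P) = t • R := coh t ht hts
  have e2 : ψ P = R := by
    have := coh 1 one_pos h1s
    rwa [one_smul, one_smul] at this
  rw [e1, e2]
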